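/- arXiv:2506.23892 — 3 statements merged into one kernel-verified Lean document; each statement's English description precedes it below -/
import Mathlib

section
/- Restricted posterior reconstruction: with W_s, V_s ∈ ℝ^{d×s} satisfying V_sᵀ W_s = I_s, Γ_pr = W_s (V_sᵀ Γ_pr V_s) W_sᵀ (i.e., W_s V_sᵀ projects onto Ran(Γ_pr)), define Ĝ = G W_s, Γ̂_pr = V_sᵀ Γ_pr V_s, and Γ̂_pos = Γ̂_pr − Γ̂_pr Ĝᵀ(Ĝ Γ̂_pr Ĝᵀ + Γ_obs)⁻¹ Ĝ Γ̂_pr. Then W_s Γ̂_pos W_sᵀ = Γ_pos, where Γ_pos = Γ_pr − Γ_pr Gᵀ(Γ_obs + G Γ_pr Gᵀ)⁻¹ G Γ_pr. -/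
open Matrix

/-- Restricted posterior reconstruction: with `W_s, V_s ∈ ℝ^{d×s}` satisfying
`V_sᵀ W_s = I_s` and with the oblique projector `W_s V_sᵀ` acting as the identity on
`Ran(Γ_pr)` (so that `W_s V_sᵀ Γ_pr = Γ_pr` and `Γ_pr V_s W_sᵀ = Γ_pr`), define
`Ĝ = G W_s`, `Γ̂_pr = V_sᵀ Γ_pr V_s` and
`Γ̂_pos = Γ̂_pr − Γ̂_pr Ĝᵀ (Ĝ Γ̂_pr Ĝᵀ + Γ_obs)⁻¹ Ĝ Γ̂_pr`. Then
`W_s Γ̂_pos W_sᵀ = Γ_pos`, where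
`Γ_pos = Γ_pr − Γ_pr Gᵀ (Γ_obs + G Γ_pr Gᵀ)⁻¹ G Γ_pr`. -/
theorem restricted_posterior_reconstruction
    {d s m : ℕ} (G : Matrix (Fin m) (Fin d) ℝ)
    (Γpr : Matrix (Fin d) (Fin d) ℝ) (Γobs : Matrix (Fin m) (Fin m) ℝ)
    (Ws Vs : Matrix (Fin d) (Fin s) ℝ)
    (hpr : Γpr.PosSemidef) (hobs : Γobs.PosDef)
    (hVW : Vsᵀ * Ws = 1)
    (hproj₁ : Ws * Vsᵀ * Γpr = Γpr) (hproj₂ : Γpr * Vs * Wsᵀ = Γpr) :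
    Ws * ((Vsᵀ * Γpr * Vs) -
        (Vsᵀ * Γpr * Vs) * (G * Ws)ᵀ *
          ((G * Ws) * (Vsᵀ * Γpr * Vs) * (G * Ws)ᵀ + Γobs)⁻¹ *
          (G * Ws) * (Vsᵀ * Γpr * Vs)) * Wsᵀ =
      Γpr - Γpr * Gᵀ * (Γobs + G * Γpr * Gᵀ)⁻¹ * G * Γpr := by
  have key : Ws * (Vsᵀ * Γpr * Vs) * Wsᵀ = Γpr := by
    calc Ws * (Vsᵀ * Γpr * Vs) * Wsᵀ = (Ws * Vsᵀ * Γpr) * Vs * Wsᵀ := by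
          simp only [Matrix.mul_assoc]
      _ = Γpr := by rw [hproj₁, hproj₂]
  have hmid : (G * Ws) * (Vsᵀ * Γpr * Vs) * (G * Ws)ᵀ + Γobs = Γobs + G * Γpr * Gᵀ := by
    rw [transpose_mul, add_comm]
    congr 1
    calc G * Ws * (Vsᵀ * Γpr * Vs) * (Wsᵀ * Gᵀ)
        = G * (Ws * (Vsᵀ * Γpr * Vs) * Wsᵀ) * Gᵀ := by simp only [Matrix.mul_assoc]
      _ = G * Γpr * Gᵀ := by rw [key]
  rw [hmid, Matrix.mul_sub, Matrix.sub_mul, key, transpose_mul]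
  congr 1
  calc Ws * ((Vsᵀ * Γpr * Vs) * (Wsᵀ * Gᵀ) * (Γobs + G * Γpr * Gᵀ)⁻¹ * (G * Ws) *
        (Vsᵀ * Γpr * Vs)) * Wsᵀ
      = (Ws * (Vsᵀ * Γpr * Vs) * Wsᵀ) * Gᵀ * (Γobs + G * Γpr * Gᵀ)⁻¹ * G *
        (Ws * (Vsᵀ * Γpr * Vs) * Wsᵀ) := by simp only [Matrix.mul_assoc]
    _ = Γpr * Gᵀ * (Γobs + G * Γpr * Gᵀ)⁻¹ * G * Γpr := by rw [key]
end

section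
/- If A is stable and P solves the Lyapunov equation A P + P Aᵀ = −L Lᵀ, then the rank of P equals the rank of the reachability matrix [L, AL, A²L, ..., A^{d−1}L]; in particular Ran(P) contains Ran(L). -/
open Matrix Polynomial

namespace LyapunovAux

/-- A sum of matrices applied to a vector. -/
lemma sum_mulVec {R : Type*} [CommRing R] {m n : Type*} [Fintype n] {ι : Type*}
    (t : Finset ι) (f : ι → Matrix m n R) (v : n → R) :
    (∑ i ∈ t, f i) *ᵥ v = ∑ i ∈ t, f i *ᵥ v := by
  classical
  induction t using Finset.cons_induction with
  | empty => simp [Matrix.zero_mulVec]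
  | cons a t ha ih => rw [Finset.sum_cons, Finset.sum_cons, Matrix.add_mulVec, ih]

lemma mulVec_sum {R : Type*} [CommRing R] {m n : Type*} [Fintype n] {ι : Type*}
    (t : Finset ι) (P : Matrix m n R) (f : ι → n → R) :
    P *ᵥ (∑ i ∈ t, f i) = ∑ i ∈ t, P *ᵥ f i := by
  classical
  induction t using Finset.cons_induction with
  | empty => simp [Matrix.mulVec_zero]
  | cons a t ha ih => rw [Finset.sum_cons, Finset.sum_cons, Matrix.mulVec_add, ih]

/-- Every power of a matrix lies in the span of the powers `B^k`, `k < n`. -/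
lemma pow_mem_span {K : Type*} [Field K] {n : ℕ} (B : Matrix (Fin n) (Fin n) K) (m : ℕ) :
    B ^ m ∈ Submodule.span K (Set.range fun k : Fin n => B ^ (k : ℕ)) := by
  induction m using Nat.strong_induction_on with
  | _ m ih =>
    rcases lt_or_ge m n with hm | hm
    · exact Submodule.subset_span ⟨⟨m, hm⟩, rfl⟩
    · rcases Nat.eq_zero_or_pos n with hn | hn
      · subst hn
        have : B ^ m = 0 := Subsingleton.elim _ _
        rw [this]; exact Submodule.zero_mem _
      · have hmonic : B.charpoly.Monic := B.charpoly_monic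
        have hdeg : B.charpoly.natDegree = n := by
          simpa [Fintype.card_fin] using B.charpoly_natDegree_eq_dim
        set q : K[X] := X ^ n - B.charpoly with hq
        have hqdeg : q.natDegree < n := by
          rcases eq_or_ne q 0 with h0 | h0
          · simpa [h0] using hn
          · rw [natDegree_lt_iff_degree_lt h0]
            have h1 : (X ^ n - B.charpoly).degree < (X ^ n : K[X]).degree :=
              degree_sub_lt (by rw [degree_X_pow, degree_eq_natDegree hmonic.ne_zero, hdeg])
                (pow_ne_zero _ X_ne_zero)
                (by rw [leadingCoeff_X_pow, hmonic.leadingCoeff])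
            simpa [degree_X_pow] using h1
        have hBn : B ^ n = ∑ j ∈ Finset.range n, q.coeff j • B ^ j := by
          have h1 : aeval B q = ∑ j ∈ Finset.range n, q.coeff j • B ^ j :=
            aeval_eq_sum_range' hqdeg B
          have h2 : aeval B q = B ^ n := by
            simp [hq, map_sub, Matrix.aeval_self_charpoly]
          rw [← h2, h1]
        have hBm : B ^ m = ∑ j ∈ Finset.range n, q.coeff j • B ^ (m - n + j) := by
          have : B ^ m = B ^ (m - n) * B ^ n := by
            rw [← pow_add, Nat.sub_add_cancel hm]
          rw [this, hBn, Finset.mul_sum]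
          refine Finset.sum_congr rfl fun j hj => ?_
          rw [mul_smul_comm, ← pow_add]
        rw [hBm]
        refine Submodule.sum_mem _ fun j hj => Submodule.smul_mem _ _ ?_
        refine ih _ ?_
        have hj' : j < n := Finset.mem_range.mp hj
        omega

lemma span_mulVec_zero {d s : ℕ} {A : Matrix (Fin d) (Fin d) ℝ} {L : Matrix (Fin d) (Fin s) ℝ}
    {x : Fin d → ℝ} (h : ∀ k : Fin d, Lᵀ *ᵥ (Aᵀ ^ (k : ℕ) *ᵥ x) = 0) (m : ℕ) :
    Lᵀ *ᵥ (Aᵀ ^ m *ᵥ x) = 0 := by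
  have hmem := pow_mem_span Aᵀ m
  refine Submodule.span_induction (p := fun M _ => Lᵀ *ᵥ (M *ᵥ x) = 0) ?_ ?_ ?_ ?_ hmem
  · rintro M ⟨k, rfl⟩; exact h k
  · simp
  · intro M N _ _ hM hN
    rw [Matrix.add_mulVec, Matrix.mulVec_add, hM, hN, add_zero]
  · intro a M _ hM
    rw [Matrix.smul_mulVec, Matrix.mulVec_smul, hM, smul_zero]

section Real

variable {d s : ℕ} {A : Matrix (Fin d) (Fin d) ℝ} {L : Matrix (Fin d) (Fin s) ℝ}
  {P : Matrix (Fin d) (Fin d) ℝ}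

lemma ker_step (hP : P.PosSemidef) (hLyap : A * P + P * Aᵀ = -(L * Lᵀ))
    {x : Fin d → ℝ} (hx : P *ᵥ x = 0) :
    Lᵀ *ᵥ x = 0 ∧ P *ᵥ (Aᵀ *ᵥ x) = 0 := by
  have h0 : A *ᵥ (P *ᵥ x) + P *ᵥ (Aᵀ *ᵥ x) = -(L *ᵥ (Lᵀ *ᵥ x)) := by
    have h := congrArg (fun M => M *ᵥ x) hLyap
    simpa [Matrix.add_mulVec, Matrix.neg_mulVec, Matrix.mulVec_mulVec] using h
  rw [hx, Matrix.mulVec_zero, zero_add] at h0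
  have hsym : Pᵀ = P := hP.1
  have hdot : x ⬝ᵥ (P *ᵥ (Aᵀ *ᵥ x)) = 0 := by
    rw [dotProduct_mulVec]
    have hvP : x ᵥ* P = 0 := by
      rw [← Matrix.mulVec_transpose, hsym, hx]
    rw [hvP, zero_dotProduct]
  rw [h0] at hdot
  have hLL : (Lᵀ *ᵥ x) ⬝ᵥ (Lᵀ *ᵥ x) = 0 := by
    have : x ⬝ᵥ -(L *ᵥ (Lᵀ *ᵥ x)) = -((Lᵀ *ᵥ x) ⬝ᵥ (Lᵀ *ᵥ x)) := by
      rw [dotProduct_neg, dotProduct_mulVec, ← Matrix.mulVec_transpose]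
    rw [this] at hdot
    linarith [hdot]
  have hL : Lᵀ *ᵥ x = 0 := dotProduct_self_eq_zero.mp hLL
  refine ⟨hL, ?_⟩
  rw [hL, Matrix.mulVec_zero, neg_zero] at h0
  exact h0

lemma ker_all (hP : P.PosSemidef) (hLyap : A * P + P * Aᵀ = -(L * Lᵀ))
    {x : Fin d → ℝ} (hx : P *ᵥ x = 0) (k : ℕ) :
    P *ᵥ (Aᵀ ^ k *ᵥ x) = 0 ∧ Lᵀ *ᵥ (Aᵀ ^ k *ᵥ x) = 0 := by
  induction k with
  | zero =>
    simpa [Matrix.one_mulVec] using ⟨hx, (ker_step hP hLyap hx).1⟩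
  | succ k ih =>
    have hstep := ker_step hP hLyap ih.1
    have hrw : Aᵀ ^ (k + 1) *ᵥ x = Aᵀ *ᵥ (Aᵀ ^ k *ᵥ x) := by
      rw [Matrix.mulVec_mulVec, ← pow_succ']
    rw [hrw]
    exact ⟨hstep.2, (ker_step hP hLyap hstep.2).1⟩

end Real

section Complex

lemma eval_charpoly' {n : Type*} [Fintype n] [DecidableEq n] (B : Matrix n n ℂ) (μ : ℂ) :
    B.charpoly.eval μ = (μ • (1 : Matrix n n ℂ) - B).det := by
  rw [Matrix.charpoly, eval_det, matPolyEquiv_charmatrix]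
  congr 1
  simp [Matrix.scalar_apply]
  ext i j
  simp [Matrix.diagonal_apply, Matrix.one_apply, mul_ite]

lemma mem_spectrum_of_eigen {d : ℕ} {B : Matrix (Fin d) (Fin d) ℂ} {μ : ℂ} {v : Fin d → ℂ}
    (hv : v ≠ 0) (h : B *ᵥ v = μ • v) : μ ∈ spectrum ℂ B := by
  rw [spectrum.mem_iff]
  intro hunit
  have h1 : (algebraMap ℂ (Matrix (Fin d) (Fin d) ℂ) μ - B) *ᵥ v = 0 := by
    rw [Algebra.algebraMap_eq_smul_one, Matrix.sub_mulVec, Matrix.smul_mulVec,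
      Matrix.one_mulVec, h, sub_self]
  obtain ⟨u, hu⟩ := hunit
  apply hv
  calc v = 1 *ᵥ v := (Matrix.one_mulVec v).symm
    _ = ((↑u⁻¹ : Matrix (Fin d) (Fin d) ℂ) * ↑u) *ᵥ v := by rw [Units.inv_mul]
    _ = (↑u⁻¹ : Matrix (Fin d) (Fin d) ℂ) *ᵥ ((algebraMap ℂ (Matrix (Fin d) (Fin d) ℂ) μ - B) *ᵥ v) := by
        rw [Matrix.mulVec_mulVec, hu]
    _ = 0 := by rw [h1, Matrix.mulVec_zero]

lemma complex_ker {d s : ℕ} {A : Matrix (Fin d) (Fin d) ℂ} {L : Matrix (Fin d) (Fin s) ℂ}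
    {P : Matrix (Fin d) (Fin d) ℂ}
    (hstab : ∀ μ ∈ spectrum ℂ A, μ.re < 0)
    (hLyap : A * P + P * Aᵀ = -(L * Lᵀ))
    {z : Fin d → ℂ} (hz : ∀ k : ℕ, Lᵀ *ᵥ (Aᵀ ^ k *ᵥ z) = 0) :
    P *ᵥ z = 0 := by
  classical
  by_contra hPz
  set W : Submodule ℂ (Fin d → ℂ) := ⨅ k : ℕ, LinearMap.ker ((Lᵀ * Aᵀ ^ k).mulVecLin) with hWdef
  have hmemW : ∀ w, w ∈ W ↔ ∀ k : ℕ, Lᵀ *ᵥ (Aᵀ ^ k *ᵥ w) = 0 := by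
    intro w
    simp only [hWdef, Submodule.mem_iInf, LinearMap.mem_ker, Matrix.mulVecLin_apply,
      ← Matrix.mulVec_mulVec]
  have hzW : z ∈ W := (hmemW z).2 hz
  have hWA : ∀ w ∈ W, (-Aᵀ) *ᵥ w ∈ W := by
    intro w hw
    rw [hmemW] at hw ⊢
    intro k
    rw [Matrix.neg_mulVec, Matrix.mulVec_neg, Matrix.mulVec_neg]
    have : Aᵀ ^ k *ᵥ (Aᵀ *ᵥ w) = Aᵀ ^ (k + 1) *ᵥ w := by
      rw [Matrix.mulVec_mulVec, ← pow_succ]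
    rw [this, hw (k + 1), neg_zero]
  have hbase : ∀ w ∈ W, A *ᵥ (P *ᵥ w) = P *ᵥ ((-Aᵀ) *ᵥ w) := by
    intro w hw
    have h0 := congrArg (fun M => M *ᵥ w) hLyap
    simp only [Matrix.add_mulVec, Matrix.neg_mulVec, ← Matrix.mulVec_mulVec] at h0
    have hLw : Lᵀ *ᵥ w = 0 := by simpa [Matrix.one_mulVec] using (hmemW w).1 hw 0
    rw [hLw, Matrix.mulVec_zero, neg_zero] at h0
    rw [Matrix.neg_mulVec, Matrix.mulVec_neg]
    exact eq_neg_of_add_eq_zero_left h0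
  have hpow : ∀ (n : ℕ) (w : Fin d → ℂ), w ∈ W →
      ((-Aᵀ) ^ n *ᵥ w ∈ W ∧ A ^ n *ᵥ (P *ᵥ w) = P *ᵥ ((-Aᵀ) ^ n *ᵥ w)) := by
    intro n
    induction n with
    | zero => intro w hw; simp [Matrix.one_mulVec, hw]
    | succ n ih =>
      intro w hw
      obtain ⟨h1, h2⟩ := ih w hw
      have e1 : (-Aᵀ) ^ (n + 1) *ᵥ w = (-Aᵀ) *ᵥ ((-Aᵀ) ^ n *ᵥ w) := by
        rw [Matrix.mulVec_mulVec, ← pow_succ']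
      have e2 : A ^ (n + 1) *ᵥ (P *ᵥ w) = A *ᵥ (A ^ n *ᵥ (P *ᵥ w)) := by
        rw [Matrix.mulVec_mulVec (P *ᵥ w) A (A ^ n), ← pow_succ']
      refine ⟨by rw [e1]; exact hWA _ h1, ?_⟩
      rw [e2, h2, hbase _ h1, e1]
  have haeval : ∀ (p : ℂ[X]) (w : Fin d → ℂ), w ∈ W →
      (aeval A p) *ᵥ (P *ᵥ w) = P *ᵥ ((aeval (-Aᵀ) p) *ᵥ w) := by
    intro p w hw
    rw [aeval_eq_sum_range (p := p) A, aeval_eq_sum_range (p := p) (-Aᵀ)]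
    rw [sum_mulVec, sum_mulVec, mulVec_sum]
    refine Finset.sum_congr rfl fun i _ => ?_
    rw [Matrix.smul_mulVec, Matrix.smul_mulVec, (hpow i w hw).2,
      Matrix.mulVec_smul]
  -- the invariant subspace U = P(W)
  set U : Submodule ℂ (Fin d → ℂ) := Submodule.map P.mulVecLin W with hUdef
  have hUne : U ≠ ⊥ := by
    rw [Submodule.ne_bot_iff]
    exact ⟨P *ᵥ z, ⟨z, hzW, rfl⟩, hPz⟩
  have hUinv : ∀ u ∈ U, A.mulVecLin u ∈ U := by
    rintro u ⟨w, hw, rfl⟩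
    refine ⟨(-Aᵀ) *ᵥ w, hWA _ hw, ?_⟩
    simp only [Matrix.mulVecLin_apply]
    exact (hbase w hw).symm
  haveI : Nontrivial U := Submodule.nontrivial_iff_ne_bot.mpr hUne
  set g : Module.End ℂ U := A.mulVecLin.restrict hUinv with hgdef
  obtain ⟨μ, hμ⟩ := Module.End.exists_eigenvalue g
  obtain ⟨v, hv⟩ := hμ.exists_hasEigenvector
  have hv0 : (v : Fin d → ℂ) ≠ 0 := fun h => hv.2 (Subtype.coe_injective (by simpa using h))
  have hAv : A *ᵥ (v : Fin d → ℂ) = μ • (v : Fin d → ℂ) := by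
    have h2 := congrArg (Subtype.val) hv.apply_eq_smul
    simpa [hgdef, LinearMap.restrict_apply, Matrix.mulVecLin_apply] using h2
  have hμA : μ ∈ spectrum ℂ A := mem_spectrum_of_eigen hv0 hAv
  have hμre : μ.re < 0 := hstab μ hμA
  obtain ⟨w0, hw0W, hw0⟩ := v.2
  set χ : ℂ[X] := (-Aᵀ).charpoly with hχdef
  have hχ0 : aeval (-Aᵀ) χ = 0 := Matrix.aeval_self_charpoly _
  have h1 : (aeval A χ) *ᵥ (v : Fin d → ℂ) = 0 := by
    simp only [Matrix.mulVecLin_apply] at hw0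
    rw [← hw0, haeval χ w0 hw0W, hχ0, Matrix.zero_mulVec, Matrix.mulVec_zero]
  have hpows : ∀ i : ℕ, A ^ i *ᵥ (v : Fin d → ℂ) = μ ^ i • (v : Fin d → ℂ) := by
    intro i
    induction i with
    | zero => simp [Matrix.one_mulVec]
    | succ i ih =>
      have e : A ^ (i + 1) *ᵥ (v : Fin d → ℂ) = A *ᵥ (A ^ i *ᵥ (v : Fin d → ℂ)) := by
        rw [Matrix.mulVec_mulVec, ← pow_succ']
      rw [e, ih, Matrix.mulVec_smul, hAv, smul_smul, ← pow_succ]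
  have h2 : (aeval A χ) *ᵥ (v : Fin d → ℂ) = χ.eval μ • (v : Fin d → ℂ) := by
    rw [aeval_eq_sum_range (p := χ) A, sum_mulVec,
      eval_eq_sum_range' (lt_add_one χ.natDegree) μ, Finset.sum_smul]
    refine Finset.sum_congr rfl fun i _ => ?_
    rw [Matrix.smul_mulVec, hpows, smul_smul]
  have hχμ : χ.eval μ = 0 := by
    rcases smul_eq_zero.mp (h2 ▸ h1) with h | h
    · exact h
    · exact absurd h hv0
  have hdet : (μ • (1 : Matrix (Fin d) (Fin d) ℂ) - (-Aᵀ)).det = 0 := by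
    rw [← eval_charpoly']; exact hχμ
  have hneg : (-μ) ∈ spectrum ℂ A := by
    rw [spectrum.mem_iff]
    intro hunit
    have hdet2 : (algebraMap ℂ (Matrix (Fin d) (Fin d) ℂ) (-μ) - A).det ≠ 0 :=
      isUnit_iff_ne_zero.mp ((Matrix.isUnit_iff_isUnit_det _).mp hunit)
    apply hdet2
    have e0 : algebraMap ℂ (Matrix (Fin d) (Fin d) ℂ) (-μ) - A
        = -(μ • (1 : Matrix (Fin d) (Fin d) ℂ) + A) := by
      rw [Algebra.algebraMap_eq_smul_one, neg_smul, neg_add]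
      abel
    rw [e0, Matrix.det_neg]
    have e1 : (μ • (1 : Matrix (Fin d) (Fin d) ℂ) + A)
        = (μ • (1 : Matrix (Fin d) (Fin d) ℂ) - (-Aᵀ))ᵀ := by
      rw [Matrix.transpose_sub, Matrix.transpose_smul, Matrix.transpose_one,
        Matrix.transpose_neg, Matrix.transpose_transpose, sub_neg_eq_add]
    rw [e1, Matrix.det_transpose, hdet, mul_zero]
  have hnegre : (-μ).re < 0 := hstab _ hneg
  rw [Complex.neg_re] at hnegre
  linarith

end Complex

noncomputable section Euclid

open RealInnerProductSpace

/-- The equivalence between the pi type and Euclidean space. -/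
def eqv (n : ℕ) : (Fin n → ℝ) ≃ₗ[ℝ] EuclideanSpace ℝ (Fin n) :=
  (WithLp.linearEquiv 2 ℝ (Fin n → ℝ)).symm

lemma toEuclideanLin_comp {m n : ℕ} (M : Matrix (Fin m) (Fin n) ℝ) :
    Matrix.toEuclideanLin M
      = (eqv m).toLinearMap.comp (M.mulVecLin.comp ((eqv n).symm.toLinearMap)) := rfl

lemma range_toEuclideanLin {m n : ℕ} (M : Matrix (Fin m) (Fin n) ℝ) :
    LinearMap.range (Matrix.toEuclideanLin M)
      = Submodule.map (↑(eqv m) : (Fin m → ℝ) →ₗ[ℝ] EuclideanSpace ℝ (Fin m))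
          (LinearMap.range M.mulVecLin) := by
  rw [toEuclideanLin_comp, LinearMap.range_comp, LinearMap.range_comp,
    LinearEquiv.range, Submodule.map_top]

lemma ker_toEuclideanLin {m n : ℕ} (M : Matrix (Fin m) (Fin n) ℝ) :
    LinearMap.ker (Matrix.toEuclideanLin M)
      = Submodule.map (↑(eqv n) : (Fin n → ℝ) →ₗ[ℝ] EuclideanSpace ℝ (Fin n))
          (LinearMap.ker M.mulVecLin) := by
  rw [toEuclideanLin_comp, LinearMap.ker_comp, LinearEquiv.ker, Submodule.comap_bot,
    LinearMap.ker_comp, ← Submodule.map_equiv_eq_comap_symm]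

lemma ker_adjoint {E F : Type*} [NormedAddCommGroup E] [NormedAddCommGroup F]
    [InnerProductSpace ℝ E] [InnerProductSpace ℝ F]
    [FiniteDimensional ℝ E] [FiniteDimensional ℝ F] (f : E →ₗ[ℝ] F) :
    LinearMap.ker (LinearMap.adjoint f) = (LinearMap.range f)ᗮ := by
  ext y
  simp only [LinearMap.mem_ker, Submodule.mem_orthogonal]
  constructor
  · rintro h u ⟨x, rfl⟩
    rw [real_inner_comm, ← LinearMap.adjoint_inner_left, h, inner_zero_left]
  · intro h
    have h2 : ∀ x, ⟪LinearMap.adjoint f y, x⟫ = (0 : ℝ) := fun x => by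
      rw [LinearMap.adjoint_inner_left, real_inner_comm]
      exact h _ ⟨x, rfl⟩
    exact inner_self_eq_zero.mp (h2 (LinearMap.adjoint f y))

end Euclid

end LyapunovAux

/-- If `A` is stable and `P` (symmetric positive semi-definite) solves the Lyapunov
equation `A P + P Aᵀ = −L Lᵀ`, then the range of `P` equals the range of the
reachability matrix `[L, AL, A²L, …, A^{d−1}L]` (formalized as the supremum of the
ranges of `A^k L`, `k = 0, …, d−1`); in particular `Ran(L) ⊆ Ran(P)`. -/
theorem lyapunov_solution_range
    {d s : ℕ} (A : Matrix (Fin d) (Fin d) ℝ) (L : Matrix (Fin d) (Fin s) ℝ)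
    (P : Matrix (Fin d) (Fin d) ℝ)
    (hstab : ∀ μ ∈ spectrum ℂ (A.map (Complex.ofReal)), μ.re < 0)
    (hP : P.PosSemidef) (hLyap : A * P + P * Aᵀ = -(L * Lᵀ)) :
    LinearMap.range L.mulVecLin ≤ LinearMap.range P.mulVecLin ∧
    LinearMap.range P.mulVecLin =
      ⨆ k : Fin d, LinearMap.range ((A ^ (k : ℕ) * L).mulVecLin) := by
  classical
  set T : Fin d → Matrix (Fin d) (Fin s) ℝ := fun k => A ^ (k : ℕ) * L with hT
  -- Step 1: kernel characterization
  have hker : LinearMap.ker P.mulVecLin = ⨅ k : Fin d, LinearMap.ker ((T k)ᵀ.mulVecLin) := by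
    apply le_antisymm
    · intro x hx
      rw [LinearMap.mem_ker, Matrix.mulVecLin_apply] at hx
      rw [Submodule.mem_iInf]
      intro k
      rw [LinearMap.mem_ker, Matrix.mulVecLin_apply, hT]
      show (A ^ (k : ℕ) * L)ᵀ *ᵥ x = 0
      rw [Matrix.transpose_mul, Matrix.transpose_pow, ← Matrix.mulVec_mulVec]
      exact (LyapunovAux.ker_all hP hLyap hx (k : ℕ)).2
    · intro x hx
      rw [Submodule.mem_iInf] at hx
      have hfin : ∀ k : Fin d, Lᵀ *ᵥ (Aᵀ ^ (k : ℕ) *ᵥ x) = 0 := by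
        intro k
        have h := hx k
        rw [LinearMap.mem_ker, Matrix.mulVecLin_apply, hT] at h
        have h' : (A ^ (k : ℕ) * L)ᵀ *ᵥ x = 0 := h
        rwa [Matrix.transpose_mul, Matrix.transpose_pow, ← Matrix.mulVec_mulVec] at h'
      have hall : ∀ m : ℕ, Lᵀ *ᵥ (Aᵀ ^ m *ᵥ x) = 0 := LyapunovAux.span_mulVec_zero hfin
      -- complexification
      have hmap : ∀ {m l : ℕ} (M : Matrix (Fin m) (Fin l) ℝ) (y : Fin l → ℝ),
          (M.map Complex.ofReal) *ᵥ (fun i => ((y i : ℝ) : ℂ)) = fun i => (((M *ᵥ y) i : ℝ) : ℂ) := by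
        intro m l M y
        funext i
        exact ((Complex.ofRealHom).map_mulVec M y i).symm
      have hLyap' : (A.map Complex.ofReal) * (P.map Complex.ofReal)
          + (P.map Complex.ofReal) * (A.map Complex.ofReal)ᵀ
          = -((L.map Complex.ofReal) * (L.map Complex.ofReal)ᵀ) := by
        have h := congrArg (fun M : Matrix (Fin d) (Fin d) ℝ => M.map Complex.ofReal) hLyap
        rw [show (Complex.ofReal : ℝ → ℂ) = ⇑Complex.ofRealHom from rfl] at h ⊢
        rw [Matrix.map_add _ (by simp), Matrix.map_mul, Matrix.map_mul,
          Matrix.transpose_map] at h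
        rw [h, ← Matrix.transpose_map]
        ext i j
        simp [Matrix.map_apply, Matrix.mul_apply, Matrix.transpose_apply]
      have hpowmap : ∀ k : ℕ, (A.map Complex.ofReal)ᵀ ^ k = (Aᵀ ^ k).map Complex.ofReal := by
        intro k
        rw [show (Complex.ofReal : ℝ → ℂ) = ⇑Complex.ofRealHom from rfl, ← Matrix.transpose_map]
        have := map_pow (Complex.ofRealHom.mapMatrix (m := Fin d)) Aᵀ k
        simpa [RingHom.mapMatrix_apply] using this.symm
      have hz : ∀ k : ℕ, (L.map Complex.ofReal)ᵀ *ᵥ ((A.map Complex.ofReal)ᵀ ^ k *ᵥ (fun i => ((x i : ℝ) : ℂ))) = 0 := by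
        intro k
        rw [hpowmap k, ← Matrix.transpose_map, hmap, hmap, hall k]
        funext i
        simp
      have hPz := LyapunovAux.complex_ker hstab hLyap' hz
      rw [LinearMap.mem_ker, Matrix.mulVecLin_apply]
      funext i
      show (P *ᵥ x) i = 0
      apply Complex.ofReal_injective
      have h0 : (((P *ᵥ x) i : ℝ) : ℂ)
          = (P.map Complex.ofReal *ᵥ (fun j => ((x j : ℝ) : ℂ))) i :=
        Complex.ofRealHom.map_mulVec P x i
      rw [h0, hPz]
      simp
  -- Step 2: Euclidean duality
  have hPH : Pᴴ = P := hP.1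
  have hadjP : LinearMap.adjoint (Matrix.toEuclideanLin P) = Matrix.toEuclideanLin P := by
    rw [← Matrix.toEuclideanLin_conjTranspose_eq_adjoint, hPH]
  have h1 : LinearMap.ker (Matrix.toEuclideanLin P)
      = (LinearMap.range (Matrix.toEuclideanLin P))ᗮ := by
    conv_lhs => rw [← hadjP]
    exact LyapunovAux.ker_adjoint _
  have h2 : ∀ k : Fin d, LinearMap.ker (Matrix.toEuclideanLin (T k)ᵀ)
      = (LinearMap.range (Matrix.toEuclideanLin (T k)))ᗮ := by
    intro k
    have e : ((T k)ᵀ : Matrix (Fin s) (Fin d) ℝ) = (T k)ᴴ := rfl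
    rw [e, Matrix.toEuclideanLin_conjTranspose_eq_adjoint]
    exact LyapunovAux.ker_adjoint _
  have hkerE : LinearMap.ker (Matrix.toEuclideanLin P)
      = ⨅ k : Fin d, LinearMap.ker (Matrix.toEuclideanLin (T k)ᵀ) := by
    rw [LyapunovAux.ker_toEuclideanLin, hker]
    simp only [LyapunovAux.ker_toEuclideanLin]
    rw [Submodule.map_equiv_eq_comap_symm, Submodule.comap_iInf]
    simp only [Submodule.map_equiv_eq_comap_symm]
  have horth : (LinearMap.range (Matrix.toEuclideanLin P))ᗮ
      = (⨆ k : Fin d, LinearMap.range (Matrix.toEuclideanLin (T k)))ᗮ := by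
    rw [← h1, hkerE, ← Submodule.iInf_orthogonal]
    exact iInf_congr h2
  have hrangeE : LinearMap.range (Matrix.toEuclideanLin P)
      = ⨆ k : Fin d, LinearMap.range (Matrix.toEuclideanLin (T k)) := by
    have h3 := congrArg Submodule.orthogonal horth
    rwa [Submodule.orthogonal_orthogonal, Submodule.orthogonal_orthogonal] at h3
  have hmain : LinearMap.range P.mulVecLin
      = ⨆ k : Fin d, LinearMap.range ((T k).mulVecLin) := by
    have h4 : Submodule.map (↑(LyapunovAux.eqv d) : (Fin d → ℝ) →ₗ[ℝ] EuclideanSpace ℝ (Fin d))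
          (LinearMap.range P.mulVecLin)
        = Submodule.map (↑(LyapunovAux.eqv d) : (Fin d → ℝ) →ₗ[ℝ] EuclideanSpace ℝ (Fin d))
          (⨆ k : Fin d, LinearMap.range ((T k).mulVecLin)) := by
      rw [← LyapunovAux.range_toEuclideanLin, Submodule.map_iSup]
      simp only [← LyapunovAux.range_toEuclideanLin]
      exact hrangeE
    exact Submodule.map_injective_of_injective ((LyapunovAux.eqv d).injective) h4
  refine ⟨?_, by simpa only [hT] using hmain⟩
  rcases Nat.eq_zero_or_pos d with hd | hd
  · subst hd
    intro y hy
    exact ⟨0, Subsingleton.elim _ _⟩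
  · have hL : L.mulVecLin = (T ⟨0, hd⟩).mulVecLin := by
      simp [hT]
    rw [hmain, hL]
    exact le_iSup (fun k : Fin d => LinearMap.range ((T k).mulVecLin)) ⟨0, hd⟩
end

section
/- Stability inheritance under balanced truncation: suppose A P + P Aᵀ = −B Bᵀ with P symmetric positive definite, and W_r, V_r ∈ ℝ^{d×r} satisfy V_rᵀ W_r = I_r, V_rᵀ P V_r = Σ_r diagonal positive definite, and P V_r = W_r Σ_r. Then A_r = V_rᵀ A W_r satisfies A_r Σ_r + Σ_r A_rᵀ = −(V_rᵀ B)(V_rᵀ B)ᵀ ⪯ 0; in particular every eigenvalue of A_r has nonpositive real part. -/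
open Matrix

open ComplexOrder

/-- Stability inheritance under balanced truncation: suppose `A P + P Aᵀ = −B Bᵀ` with
`P` symmetric positive definite, and `W_r, V_r ∈ ℝ^{d×r}` satisfy `V_rᵀ W_r = I_r`,
`V_rᵀ P V_r = Σ_r` (diagonal with positive diagonal entries) and `P V_r = W_r Σ_r`.
Then `A_r = V_rᵀ A W_r` satisfies the reduced Lyapunov equation
`A_r Σ_r + Σ_r A_rᵀ = −(V_rᵀ B)(V_rᵀ B)ᵀ ⪯ 0`; in particular every eigenvalue of `A_r`
has nonpositive real part. -/
theorem balanced_truncation_stability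
    {d r m : ℕ} (A : Matrix (Fin d) (Fin d) ℝ) (B : Matrix (Fin d) (Fin m) ℝ)
    (P : Matrix (Fin d) (Fin d) ℝ) (Wr Vr : Matrix (Fin d) (Fin r) ℝ)
    (σ : Fin r → ℝ)
    (hP : P.PosDef) (hLyap : A * P + P * Aᵀ = -(B * Bᵀ))
    (hVW : Vrᵀ * Wr = 1) (hσ : ∀ i, 0 < σ i)
    (hbal : Vrᵀ * P * Vr = Matrix.diagonal σ)
    (hPV : P * Vr = Wr * Matrix.diagonal σ) :
    (Vrᵀ * A * Wr) * Matrix.diagonal σ + Matrix.diagonal σ * (Vrᵀ * A * Wr)ᵀ =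
      -((Vrᵀ * B) * (Vrᵀ * B)ᵀ) ∧
    ((Vrᵀ * B) * (Vrᵀ * B)ᵀ).PosSemidef ∧
    (∀ μ ∈ spectrum ℂ ((Vrᵀ * A * Wr).map (Complex.ofReal)), μ.re ≤ 0) := by
  have hPsymm : Pᵀ = P := hP.1.eq
  -- Part 1: the reduced Lyapunov equation
  have e1 : Vrᵀ * A * Wr * Matrix.diagonal σ = Vrᵀ * (A * P) * Vr := by
    rw [Matrix.mul_assoc (Vrᵀ * A), ← hPV, ← Matrix.mul_assoc (Vrᵀ * A),
      Matrix.mul_assoc Vrᵀ A P]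
  have e2 : Matrix.diagonal σ * (Vrᵀ * A * Wr)ᵀ = Vrᵀ * (P * Aᵀ) * Vr := by
    have h1 : Matrix.diagonal σ * Wrᵀ = Vrᵀ * P := by
      have := congrArg Matrix.transpose hPV
      simpa [Matrix.transpose_mul, hPsymm, Matrix.diagonal_transpose] using this.symm
    calc Matrix.diagonal σ * (Vrᵀ * A * Wr)ᵀ
        = Matrix.diagonal σ * (Wrᵀ * (Aᵀ * Vr)) := by
          simp [Matrix.transpose_mul, Matrix.mul_assoc]
      _ = (Matrix.diagonal σ * Wrᵀ) * (Aᵀ * Vr) := by rw [Matrix.mul_assoc]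
      _ = Vrᵀ * P * (Aᵀ * Vr) := by rw [h1]
      _ = Vrᵀ * (P * Aᵀ) * Vr := by simp [Matrix.mul_assoc]
  have lyap : (Vrᵀ * A * Wr) * Matrix.diagonal σ + Matrix.diagonal σ * (Vrᵀ * A * Wr)ᵀ =
      -((Vrᵀ * B) * (Vrᵀ * B)ᵀ) := by
    rw [e1, e2]
    have hsum : Vrᵀ * (A * P) * Vr + Vrᵀ * (P * Aᵀ) * Vr = Vrᵀ * (A * P + P * Aᵀ) * Vr := by
      rw [Matrix.mul_add, Matrix.add_mul]
    rw [hsum, hLyap]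
    simp [Matrix.transpose_mul, Matrix.mul_assoc, Matrix.mul_neg, Matrix.neg_mul]
  refine ⟨lyap, ?_, ?_⟩
  · have := Matrix.posSemidef_self_mul_conjTranspose (Vrᵀ * B)
    simpa using this
  -- Part 3: eigenvalues
  · intro μ hμ
    set M : Matrix (Fin r) (Fin r) ℂ := (Vrᵀ * A * Wr).map Complex.ofReal with hM
    set S : Matrix (Fin r) (Fin r) ℂ := Matrix.diagonal (fun i => (σ i : ℂ)) with hS
    set Q : Matrix (Fin r) (Fin r) ℂ := ((Vrᵀ * B) * (Vrᵀ * B)ᵀ).map Complex.ofReal with hQ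
    have mapmul : ∀ {a b c : ℕ} (X : Matrix (Fin a) (Fin b) ℝ) (Y : Matrix (Fin b) (Fin c) ℝ),
        (X * Y).map Complex.ofReal = X.map Complex.ofReal * Y.map Complex.ofReal :=
      fun X Y => Matrix.map_mul (f := Complex.ofRealHom)
    have mapdiag : (Matrix.diagonal σ).map Complex.ofReal = S := by
      rw [hS, Matrix.diagonal_map (by simp)]
    have maptrans : ((Vrᵀ * A * Wr)ᵀ).map Complex.ofReal = Mᵀ := Matrix.transpose_map
    have hlyapC : M * S + S * Mᵀ = -Q := by
      rw [hM, ← mapdiag, ← maptrans, ← mapmul, ← mapmul, hQ]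
      ext i j
      have hlj := congrFun (congrFun lyap i) j
      simp only [Matrix.add_apply, Matrix.neg_apply, Matrix.map_apply]
      rw [← Complex.ofReal_add, ← Complex.ofReal_neg]
      exact congrArg _ hlj
    -- find an eigenvector of Mᵀ for μ
    have hdet : (μ • (1 : Matrix (Fin r) (Fin r) ℂ) - Mᵀ).det = 0 := by
      have hmem := (spectrum.mem_iff).mp hμ
      have h1 : ((algebraMap ℂ (Matrix (Fin r) (Fin r) ℂ)) μ - M).det = 0 := by
        by_contra h
        exact hmem ((Matrix.isUnit_iff_isUnit_det _).mpr (isUnit_iff_ne_zero.mpr h))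
      rw [← Matrix.det_transpose] at h1
      rw [Algebra.algebraMap_eq_smul_one] at h1
      simpa [Matrix.transpose_sub, Matrix.transpose_smul, Matrix.transpose_one] using h1
    obtain ⟨v, hv0, hv⟩ := (Matrix.exists_mulVec_eq_zero_iff).mpr hdet
    have heig : Mᵀ *ᵥ v = μ • v := by
      rw [Matrix.sub_mulVec, sub_eq_zero] at hv
      rw [Matrix.smul_mulVec, Matrix.one_mulVec] at hv
      exact hv.symm
    -- S is positive definite, Q is positive semidefinite over ℂ
    have hSpd : S.PosDef := by
      rw [hS]
      exact Matrix.posDef_diagonal_iff.mpr fun i => by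
        exact_mod_cast hσ i
    have hQpsd : Q.PosSemidef := by
      have hQeq : Q = ((Vrᵀ * B).map Complex.ofReal) * ((Vrᵀ * B).map Complex.ofReal)ᴴ := by
        rw [hQ, mapmul]
        congr 1
        ext i j
        simp only [Matrix.map_apply, Matrix.conjTranspose_apply, Matrix.transpose_apply]
        exact (Complex.conj_ofReal _).symm
      rw [hQeq]
      exact Matrix.posSemidef_self_mul_conjTranspose _
    -- the scalar identity
    set c : ℂ := star v ⬝ᵥ (S *ᵥ v) with hc
    have hcpos : 0 < c := hSpd.dotProduct_mulVec_pos hv0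
    have key : (starRingEnd ℂ μ + μ) * c = -(star v ⬝ᵥ (Q *ᵥ v)) := by
      have h0 : star v ⬝ᵥ ((M * S + S * Mᵀ) *ᵥ v) = star v ⬝ᵥ ((-Q) *ᵥ v) := by
        rw [hlyapC]
      have t2 : star v ⬝ᵥ ((S * Mᵀ) *ᵥ v) = μ * c := by
        rw [← Matrix.mulVec_mulVec, heig, Matrix.mulVec_smul, dotProduct_smul, hc,
          smul_eq_mul]
      have hvm : star v ᵥ* M = star (Mᵀ *ᵥ v) := by
        ext j
        simp [Matrix.vecMul, Matrix.mulVec, dotProduct, hM, Pi.star_apply,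
          star_sum, star_mul', Complex.conj_ofReal, mul_comm]
      have t1 : star v ⬝ᵥ ((M * S) *ᵥ v) = (starRingEnd ℂ μ) * c := by
        rw [← Matrix.mulVec_mulVec, Matrix.dotProduct_mulVec, hvm, heig, star_smul,
          smul_dotProduct, hc, smul_eq_mul]
        rfl
      rw [Matrix.add_mulVec, dotProduct_add, t1, t2, Matrix.neg_mulVec,
        dotProduct_neg] at h0
      rw [add_mul]
      exact h0
    have hq := hQpsd.dotProduct_mulVec_nonneg v
    have hcre : 0 < c.re := (Complex.lt_def.mp hcpos).1
    have hcim : c.im = 0 := ((Complex.lt_def.mp hcpos).2).symm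
    have hqre : 0 ≤ (star v ⬝ᵥ (Q *ᵥ v)).re := by
      simpa using (Complex.le_def.mp hq).1
    have hre := congrArg Complex.re key
    simp only [Complex.add_re, Complex.mul_re, Complex.add_im, Complex.conj_re,
      Complex.conj_im, Complex.neg_re, hcim, mul_zero, sub_zero] at hre
    nlinarith [hre, hcre, hqre]
end
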